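/- If a ring R has stable range one, then R is left uniquely generated: for all a, b ∈ R, Ra = Rb implies there exists a unit u ∈ R with a = ub. -/
import Mathlib

/-- Key lemma (left-right symmetry of stable range one, elementwise):
if `a + (1 - a*x)*y` is a unit, then so is `a + y*(1 - x*a)`,
with explicit inverse `x + (1 - x*y) * u⁻¹ * (1 - a*x)`. -/
lemma key_lemma_sr1 {R : Type*} [Ring R] (a x y : R)
    (h : IsUnit (a + (1 - a*x)*y)) : IsUnit (a + y*(1 - x*a)) := by
  obtain ⟨U, hU⟩ := h
  have hz1 : (a + (1 - a*x)*y) * ↑U⁻¹ = 1 := by rw [← hU]; exact U.mul_inv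
  have hz2 : (↑U⁻¹ : R) * (a + (1 - a*x)*y) = 1 := by rw [← hU]; exact U.inv_mul
  have e1 : (a + y*(1 - x*a)) * (1 - x*y) = (1 - y*x) * (a + (1 - a*x)*y) := by
    noncomm_ring
  have e3 : (1 - a*x) * (a + y*(1 - x*a)) = (a + (1 - a*x)*y) * (1 - x*a) := by
    noncomm_ring
  have m1 : (a + y*(1 - x*a)) * (x + (1 - x*y) * ↑U⁻¹ * (1 - a*x)) = 1 := by
    have expand : (a + y*(1 - x*a)) * (x + (1 - x*y) * ↑U⁻¹ * (1 - a*x))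
        = (a + y*(1 - x*a))*x
          + ((a + y*(1 - x*a)) * (1 - x*y)) * (↑U⁻¹ * (1 - a*x)) := by
      noncomm_ring
    rw [expand, e1]
    have assoc1 : ((1 - y*x) * (a + (1 - a*x)*y)) * ((↑U⁻¹ : R) * (1 - a*x))
        = (1 - y*x) * (((a + (1 - a*x)*y) * ↑U⁻¹) * (1 - a*x)) := by
      noncomm_ring
    rw [assoc1, hz1]
    noncomm_ring
  have m2 : (x + (1 - x*y) * ↑U⁻¹ * (1 - a*x)) * (a + y*(1 - x*a)) = 1 := by
    have expand : (x + (1 - x*y) * ↑U⁻¹ * (1 - a*x)) * (a + y*(1 - x*a))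
        = x*(a + y*(1 - x*a))
          + ((1 - x*y) * ↑U⁻¹) * ((1 - a*x) * (a + y*(1 - x*a))) := by
      noncomm_ring
    rw [expand, e3]
    have assoc2 : ((1 - x*y) * (↑U⁻¹ : R)) * ((a + (1 - a*x)*y) * (1 - x*a))
        = (1 - x*y) * ((↑U⁻¹ * (a + (1 - a*x)*y)) * (1 - x*a)) := by
      noncomm_ring
    rw [assoc2, hz2]
    noncomm_ring
  exact ⟨⟨_, _, m1, m2⟩, rfl⟩

theorem stmt_8 (R : Type*) [Ring R]
    (hsr : ∀ a x b : R, a * x + b = 1 → ∃ y : R, IsUnit (a + b * y)) :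
    ∀ a b : R, (∀ r : R, (∃ s : R, r = s * a) ↔ (∃ s : R, r = s * b)) →
      ∃ u : R, IsUnit u ∧ a = u * b := by
  intro a b hiff
  obtain ⟨s, hs⟩ : ∃ s : R, a = s * b := (hiff a).mp ⟨1, (one_mul a).symm⟩
  obtain ⟨t, ht⟩ : ∃ t : R, b = t * a := (hiff b).mpr ⟨1, (one_mul b).symm⟩
  obtain ⟨y, hy⟩ := hsr t s (1 - t*s) (by noncomm_ring)
  have hw : IsUnit (t + y*(1 - s*t)) := key_lemma_sr1 t s y hy
  obtain ⟨W, hW⟩ := hw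
  have hWa : (W : R) * a = b := by
    rw [hW]
    have h0 : (1 - s*t) * a = 0 := by
      have hsa : s * (t * a) = a := by rw [← ht, ← hs]
      have expand0 : (1 - s*t) * a = a - s * (t*a) := by noncomm_ring
      rw [expand0, hsa, sub_self]
    have expand1 : (t + y*(1 - s*t)) * a = t*a + y*((1 - s*t)*a) := by
      noncomm_ring
    rw [expand1, h0, mul_zero, add_zero, ← ht]
  refine ⟨↑W⁻¹, Units.isUnit _, ?_⟩
  calc a = (↑W⁻¹ * ↑W) * a := by rw [Units.inv_mul, one_mul]
    _ = (↑W⁻¹ : R) * ((W : R) * a) := by rw [mul_assoc]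
    _ = ↑W⁻¹ * b := by rw [hWa]
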